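/- Let E be a finite-dimensional complex inner product space and let P, Q : E →L[ℂ] E be orthogonal projections with operator norm ‖P − Q‖ ≤ 1/2. Let (ψ_i)_{i=1,…,D} be an orthonormal family whose span is the range of P, and let ψ' be a unit vector in the range of Q. Then there exist complex coefficients c_1, …, c_D with ψ' = Σ_{j=1}^D c_j · Q ψ_j and Σ_{j=1}^D |c_j| ≤ 2√D. (Bound ‖c_i‖₁ ≤ 2√D on the expansion coefficients of perturbed sector eigenvectors.) -/

import Mathlib

open scoped InnerProductSpace ComplexConjugate

/-- An orthogonal projection is a contraction. -/
lemma proj_norm_apply_le {E : Type*} [NormedAddCommGroup E] [InnerProductSpace ℂ E]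
    [FiniteDimensional ℂ E] (P : E →L[ℂ] E) (hidem : P ∘L P = P) (hsa : IsSelfAdjoint P)
    (x : E) : ‖P x‖ ≤ ‖x‖ := by
  have hadj : ∀ a b : E, ⟪P a, b⟫_ℂ = ⟪a, P b⟫_ℂ := fun a b => by
    conv_lhs => rw [← hsa.adjoint_eq]
    exact ContinuousLinearMap.adjoint_inner_left P b a
  have h1 : (‖P x‖ : ℝ) ^ 2 = ‖⟪x, P x⟫_ℂ‖ := by
    have : ⟪P x, P x⟫_ℂ = ⟪x, P x⟫_ℂ := by
      rw [hadj]
      congr 1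
      calc P (P x) = (P ∘L P) x := rfl
        _ = P x := by rw [hidem]
    rw [← this, inner_self_eq_norm_sq_to_K]
    simp [pow_two]
  have h2 : ‖⟪x, P x⟫_ℂ‖ ≤ ‖x‖ * ‖P x‖ := norm_inner_le_norm x (P x)
  nlinarith [norm_nonneg (P x), norm_nonneg x]

theorem coefficient_bound_of_perturbed_eigenvector
    {E : Type*} [NormedAddCommGroup E] [InnerProductSpace ℂ E] [FiniteDimensional ℂ E]
    (P Q : E →L[ℂ] E)
    (hP_idem : P ∘L P = P) (hP_sa : IsSelfAdjoint P)
    (hQ_idem : Q ∘L Q = Q) (hQ_sa : IsSelfAdjoint Q)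
    (hPQ : ‖P - Q‖ ≤ 1 / 2)
    (D : ℕ) (ψ : Fin D → E) (hortho : Orthonormal ℂ ψ)
    (hspan : Submodule.span ℂ (Set.range ψ) = LinearMap.range (P : E →ₗ[ℂ] E))
    (ψ' : E) (hψ'_norm : ‖ψ'‖ = 1) (hψ'_mem : ψ' ∈ LinearMap.range (Q : E →ₗ[ℂ] E)) :
    ∃ c : Fin D → ℂ,
      ψ' = ∑ j, c j • Q (ψ j) ∧ ∑ j, ‖c j‖ ≤ 2 * Real.sqrt D := by
  classical
  set S : Submodule ℂ E := LinearMap.range (Q : E →ₗ[ℂ] E) with hS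
  have hQfix : ∀ x : E, x ∈ S → Q x = x := by
    rintro x ⟨y, rfl⟩
    calc Q (Q y) = (Q ∘L Q) y := rfl
      _ = Q y := by rw [hQ_idem]
  -- the operator B = Q ∘ P restricted to S
  have hmaps : ∀ x : S, Q (P (x : E)) ∈ S := fun x => ⟨P x, rfl⟩
  let B : S →ₗ[ℂ] S := LinearMap.restrict ((Q : E →ₗ[ℂ] E).comp (P : E →ₗ[ℂ] E))
    (fun x hx => ⟨P x, rfl⟩)
  have hBapply : ∀ x : S, ((B x : E)) = Q (P (x : E)) := fun x => rfl
  -- key estimate: ‖x - B x‖ ≤ ‖x‖ / 2 for x ∈ S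
  have hkey : ∀ x : S, ‖(x : E) - (B x : E)‖ ≤ ‖(x : E)‖ / 2 := by
    intro x
    have hx : Q (x : E) = (x : E) := hQfix _ x.2
    have : (x : E) - (B x : E) = Q ((Q - P) (x : E)) := by
      rw [hBapply]
      calc (x : E) - Q (P (x:E)) = Q (x : E) - Q (P (x:E)) := by rw [hx]
        _ = Q ((x:E) - P (x:E)) := by rw [map_sub]
        _ = Q (Q (x:E) - P (x:E)) := by rw [hx]
        _ = Q ((Q - P) (x:E)) := by simp
    rw [this]
    calc ‖Q ((Q - P) (x : E))‖ ≤ ‖(Q - P) (x : E)‖ :=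
          proj_norm_apply_le Q hQ_idem hQ_sa _
      _ ≤ ‖Q - P‖ * ‖(x : E)‖ := (Q - P).le_opNorm _
      _ ≤ (1/2) * ‖(x : E)‖ := by
          apply mul_le_mul_of_nonneg_right _ (norm_nonneg _)
          rw [norm_sub_rev]; exact hPQ
      _ = ‖(x : E)‖ / 2 := by ring
  -- B is injective hence surjective
  have hinj : Function.Injective B := by
    rw [← LinearMap.ker_eq_bot, Submodule.eq_bot_iff]
    intro x hx
    have h0 : B x = 0 := hx
    have := hkey x
    rw [h0] at this
    simp only [ZeroMemClass.coe_zero, sub_zero] at this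
    have hxn : ‖(x : E)‖ = 0 := by linarith [norm_nonneg (x : E)]
    ext
    simpa using norm_eq_zero.mp hxn
  have hsurj : Function.Surjective B := LinearMap.injective_iff_surjective.mp hinj
  obtain ⟨v, hv⟩ := hsurj ⟨ψ', hψ'_mem⟩
  have hv' : Q (P (v : E)) = ψ' := congrArg Subtype.val hv
  -- bound on ‖v‖
  have hvnorm : ‖(v : E)‖ ≤ 2 := by
    have h := hkey v
    rw [hv] at h
    simp only [Submodule.coe_mk] at h
    have : ‖(v : E)‖ ≤ ‖(v : E) - ψ'‖ + ‖ψ'‖ := by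
      simpa using norm_add_le ((v : E) - ψ') ψ'
    rw [hψ'_norm] at this
    linarith
  -- expand P v in the orthonormal family
  set c : Fin D → ℂ := fun j => ⟪ψ j, P (v : E)⟫_ℂ with hc
  set V : Submodule ℂ E := Submodule.span ℂ (Set.range ψ) with hV
  have hPvV : P (v : E) ∈ V := by
    rw [hspan]; exact ⟨v, rfl⟩
  have hPv : P (v : E) = ∑ j, c j • ψ j := by
    set w : E := P (v : E) - ∑ j, c j • ψ j with hw
    have hwV : w ∈ V := by
      apply Submodule.sub_mem _ hPvV
      exact Submodule.sum_mem _ fun j _ =>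
        Submodule.smul_mem _ _ (Submodule.subset_span ⟨j, rfl⟩)
    have hwperp : ∀ i, ⟪ψ i, w⟫_ℂ = 0 := by
      intro i
      rw [hw, inner_sub_right, inner_sum]
      simp only [inner_smul_right]
      simp only [orthonormal_iff_ite.mp hortho, mul_ite, mul_one, mul_zero]
      rw [Finset.sum_ite_eq Finset.univ i c]
      simp [hc]
    have hworth : w ∈ Vᗮ := by
      rw [Submodule.mem_orthogonal']
      intro u hu
      induction hu using Submodule.span_induction with
      | mem u hu =>
          obtain ⟨i, rfl⟩ := hu
          rw [← inner_conj_symm, hwperp i, map_zero]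
      | zero => simp
      | add a b _ _ ha hb => rw [inner_add_right, ha, hb, add_zero]
      | smul r a _ ha => rw [inner_smul_right, ha, mul_zero]
    have : w = 0 := by
      have := (Submodule.orthogonal_disjoint V).le_bot ⟨hwV, hworth⟩
      simpa using this
    rw [hw] at this
    exact sub_eq_zero.mp this
  refine ⟨c, ?_, ?_⟩
  · rw [← hv', hPv, map_sum]
    simp only [map_smul]
  · have habs : ∀ j, ‖c j‖ = ‖c j‖ := fun j => rfl
    have hPvnorm : ‖P (v : E)‖ ≤ 2 :=
      le_trans (proj_norm_apply_le P hP_idem hP_sa _) hvnorm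
    have hbessel : ∑ j, ‖c j‖ ^ 2 ≤ ‖P (v : E)‖ ^ 2 :=
      hortho.sum_inner_products_le (P (v : E))
    have hsum2 : ∑ j, ‖c j‖ ^ 2 ≤ 4 := by nlinarith [norm_nonneg (P (v : E))]
    have hcs : (∑ j, ‖c j‖) ^ 2 ≤ (D : ℝ) * ∑ j, ‖c j‖ ^ 2 := by
      have := sq_sum_le_card_mul_sum_sq (s := (Finset.univ : Finset (Fin D)))
        (f := fun j => ‖c j‖)
      simpa using this
    have hfinal : (∑ j, ‖c j‖) ^ 2 ≤ 4 * (D : ℝ) := by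
      calc (∑ j, ‖c j‖) ^ 2 ≤ (D : ℝ) * ∑ j, ‖c j‖ ^ 2 := hcs
        _ ≤ (D : ℝ) * 4 := by
            apply mul_le_mul_of_nonneg_left hsum2 (Nat.cast_nonneg D)
        _ = 4 * (D : ℝ) := by ring
    have hnn : (0:ℝ) ≤ ∑ j, ‖c j‖ := Finset.sum_nonneg fun j _ => norm_nonneg _
    calc ∑ j, ‖c j‖ = Real.sqrt ((∑ j, ‖c j‖) ^ 2) := (Real.sqrt_sq hnn).symm
      _ ≤ Real.sqrt (4 * (D : ℝ)) := Real.sqrt_le_sqrt hfinal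
      _ = 2 * Real.sqrt D := by
          rw [Real.sqrt_mul (by norm_num : (0:ℝ) ≤ 4)]
          congr 1
          rw [show (4:ℝ) = 2 ^ 2 by norm_num, Real.sqrt_sq (by norm_num : (0:ℝ) ≤ 2)]
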